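/- The optimal-constant function Θ is locally Lipschitz: there exists C < ∞ depending only on the maps L_i such that for all e, e' ∈ (0,∞)⁴, |Θ(e') − Θ(e)| ≤ C · max_k(e_k + e'_k) · max_j |e_j − e'_j|. -/

import Mathlib

open MeasureTheory Set
open scoped ENNReal NNReal symmDiff

noncomputable section

abbrev R2 := ℝ × ℝ
abbrev R4 := (ℝ × ℝ) × ℝ × ℝ

def Lam (L : Fin 4 → R4 →ₗ[ℝ] R2) (E : Fin 4 → Set R2) : ℝ :=
  ∫ z : R4, ∏ i, (E i).indicator (fun _ => (1 : ℝ)) (L i z)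

def Theta (L : Fin 4 → R4 →ₗ[ℝ] R2) (e : Fin 4 → ℝ) : ℝ :=
  sSup {t | ∃ E : Fin 4 → Set R2, (∀ i, MeasurableSet (E i)) ∧
    (∀ i, volume (E i) = ENNReal.ofReal (e i)) ∧ t = Lam L E}

def box (r : ℝ) : Set R2 := Ioc (-r) r ×ˢ Ioc (-r) r

lemma box_meas (r : ℝ) : MeasurableSet (box r) := measurableSet_Ioc.prod measurableSet_Ioc

lemma box_mono : Monotone box := by
  intro x y h
  exact Set.prod_mono (Set.Ioc_subset_Ioc (by linarith) h) (Set.Ioc_subset_Ioc (by linarith) h)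

lemma box_vol (r : ℝ) : volume (box r) = ENNReal.ofReal (2*r) * ENNReal.ofReal (2*r) := by
  rw [box, Measure.volume_eq_prod, Measure.prod_prod, Real.volume_Ioc]
  ring_nf

lemma box_vol_ne_top (r : ℝ) : volume (box r) ≠ ⊤ := by
  rw [box_vol]; exact ENNReal.mul_ne_top ENNReal.ofReal_ne_top ENNReal.ofReal_ne_top

lemma iUnion_box : ⋃ n : ℕ, box n = univ := by
  ext p
  simp only [mem_iUnion, mem_univ, iff_true, box, mem_prod, mem_Ioc]
  obtain ⟨n, hn⟩ := exists_nat_gt (max |p.1| |p.2|)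
  have h1 : |p.1| < n := lt_of_le_of_lt (le_max_left _ _) hn
  have h2 : |p.2| < n := lt_of_le_of_lt (le_max_right _ _) hn
  rw [abs_lt] at h1 h2
  exact ⟨n, ⟨by linarith [h1.1], h1.2.le⟩, ⟨by linarith [h2.1], h2.2.le⟩⟩

lemma exists_subset_volume_eq {A : Set R2} (hA : MeasurableSet A) {b : ℝ} (hb : 0 ≤ b)
    (hle : ENNReal.ofReal b ≤ volume A) :
    ∃ B, B ⊆ A ∧ MeasurableSet B ∧ volume B = ENNReal.ofReal b := by
  rcases eq_or_lt_of_le hle with heq | hlt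
  · exact ⟨A, subset_rfl, hA, heq.symm⟩
  set v : ℝ → ℝ := fun r => (volume (box r)).toReal with hvdef
  set g : ℝ → ℝ := fun r => (volume (A ∩ box r)).toReal with hg
  have hfin : ∀ r, volume (A ∩ box r) ≠ ⊤ := fun r =>
    ne_top_of_le_ne_top (box_vol_ne_top r) (measure_mono inter_subset_right)
  have hmono : ∀ {x y : ℝ}, x ≤ y → g x ≤ g y := by
    intro x y hxy
    exact ENNReal.toReal_mono (hfin y)
      (measure_mono (inter_subset_inter_right _ (box_mono hxy)))
  have hvmono : ∀ {x y : ℝ}, x ≤ y → v x ≤ v y := fun {x y} hxy =>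
    ENNReal.toReal_mono (box_vol_ne_top y) (measure_mono (box_mono hxy))
  have hbound : ∀ x y : ℝ, x ≤ y → g y - g x ≤ v y - v x := by
    intro x y hxy
    have hdne : volume (box y \ box x) ≠ ⊤ :=
      ne_top_of_le_ne_top (box_vol_ne_top y) (measure_mono diff_subset)
    have h1 : volume (A ∩ box y) ≤ volume (A ∩ box x) + volume (box y \ box x) := by
      refine le_trans (measure_mono ?_) (measure_union_le _ _)
      intro p hp
      by_cases hpx : p ∈ box x
      · exact Or.inl ⟨hp.1, hpx⟩
      · exact Or.inr ⟨hp.2, hpx⟩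
    have h2 : volume (box y \ box x) = volume (box y) - volume (box x) :=
      measure_diff (box_mono hxy) (box_meas x).nullMeasurableSet (box_vol_ne_top x)
    have h3 : (volume (A ∩ box y)).toReal ≤ (volume (A ∩ box x)).toReal + (volume (box y \ box x)).toReal := by
      rw [← ENNReal.toReal_add (hfin x) hdne]
      exact ENNReal.toReal_mono (ENNReal.add_ne_top.2 ⟨hfin x, hdne⟩) h1
    have h4 : (volume (box y \ box x)).toReal = v y - v x := by
      rw [h2, ENNReal.toReal_sub_of_le (measure_mono (box_mono hxy)) (box_vol_ne_top y)]
    simp only [hg, hvdef] at *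
    linarith
  have hv : Continuous v := by
    have : v = fun r => max (2*r) 0 * max (2*r) 0 := by
      funext r
      simp only [hvdef, box_vol, ENNReal.toReal_mul, ENNReal.toReal_ofReal']
    rw [this]
    exact ((continuous_const.mul continuous_id).max continuous_const).mul
      ((continuous_const.mul continuous_id).max continuous_const)
  have key : ∀ s t : ℝ, |g s - g t| ≤ |v s - v t| := by
    intro s t
    rcases le_total s t with h | h
    · rw [abs_sub_comm (g s), abs_sub_comm (v s),
        abs_of_nonneg (by linarith [hmono h] : (0:ℝ) ≤ g t - g s),
        abs_of_nonneg (by linarith [hvmono h] : (0:ℝ) ≤ v t - v s)]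
      exact hbound s t h
    · rw [abs_of_nonneg (by linarith [hmono h] : (0:ℝ) ≤ g s - g t),
        abs_of_nonneg (by linarith [hvmono h] : (0:ℝ) ≤ v s - v t)]
      exact hbound t s h
  have hcont : Continuous g := by
    rw [Metric.continuous_iff]
    intro t ε hε
    obtain ⟨δ, hδ, hd⟩ := Metric.continuous_iff.1 hv t ε hε
    refine ⟨δ, hδ, fun s hs => ?_⟩
    calc dist (g s) (g t) = |g s - g t| := Real.dist_eq _ _
      _ ≤ |v s - v t| := key s t
      _ = dist (v s) (v t) := (Real.dist_eq _ _).symm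
      _ < ε := hd s hs
  have hg0 : g 0 = 0 := by
    have : box (0:ℝ) = ∅ := by
      simp [box, neg_zero, Set.Ioc_self]
    simp [hg, this]
  have htend : Filter.Tendsto (fun n : ℕ => volume (A ∩ box n)) Filter.atTop (nhds (volume A)) := by
    have hmono' : Monotone fun n : ℕ => A ∩ box n := fun m n hmn =>
      inter_subset_inter_right _ (box_mono (Nat.cast_le.2 hmn))
    have := tendsto_measure_iUnion_atTop (μ := volume) hmono'
    rwa [← inter_iUnion, iUnion_box, inter_univ] at this
  have hex : ∃ n : ℕ, ENNReal.ofReal b < volume (A ∩ box n) := by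
    by_contra h
    push_neg at h
    exact absurd (le_of_tendsto' htend h) (not_le.2 hlt)
  obtain ⟨n, hn⟩ := hex
  have hbg : b < g n := by
    have := (ENNReal.toReal_lt_toReal ENNReal.ofReal_ne_top (hfin n)).2 hn
    rwa [ENNReal.toReal_ofReal hb] at this
  have hmem : b ∈ Icc (g 0) (g (n : ℝ)) := ⟨by rw [hg0]; exact hb, hbg.le⟩
  obtain ⟨t, _, hgt⟩ := intermediate_value_Icc (Nat.cast_nonneg n) hcont.continuousOn hmem
  refine ⟨A ∩ box t, inter_subset_left, hA.inter (box_meas t), ?_⟩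
  rw [← ENNReal.ofReal_toReal (hfin t)]
  congr 1

lemma exists_modification {A : Set R2} (hA : MeasurableSet A) {a b : ℝ} (ha : 0 ≤ a) (hb : 0 ≤ b)
    (hvol : volume A = ENNReal.ofReal a) :
    ∃ B, MeasurableSet B ∧ volume B = ENNReal.ofReal b ∧
      volume (symmDiff A B) = ENNReal.ofReal |a - b| := by
  have hAne : volume A ≠ ⊤ := by rw [hvol]; exact ENNReal.ofReal_ne_top
  rcases le_total b a with hba | hab
  · -- shrink : B ⊆ A
    obtain ⟨B, hBA, hBmeas, hBvol⟩ := exists_subset_volume_eq hA hb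
      (by rw [hvol]; exact ENNReal.ofReal_le_ofReal hba)
    refine ⟨B, hBmeas, hBvol, ?_⟩
    rw [symmDiff_of_ge hBA]
    rw [measure_diff hBA hBmeas.nullMeasurableSet (by rw [hBvol]; exact ENNReal.ofReal_ne_top),
      hvol, hBvol, ← ENNReal.ofReal_sub _ hb, abs_of_nonneg (by linarith)]
  · -- grow : B = A ∪ S with S ⊆ Aᶜ
    have hAc : volume (Aᶜ) = ⊤ := by
      by_contra h
      have huniv : volume (univ : Set R2) = ⊤ := by
        rw [← Set.univ_prod_univ, Measure.volume_eq_prod, Measure.prod_prod, Real.volume_univ]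
        simp
      have : volume (univ : Set R2) ≤ volume A + volume Aᶜ := by
        rw [← Set.union_compl_self A]; exact measure_union_le _ _
      rw [huniv] at this
      exact (ENNReal.add_ne_top.2 ⟨hAne, h⟩) (top_le_iff.1 this)
    obtain ⟨S, hSA, hSmeas, hSvol⟩ := exists_subset_volume_eq hA.compl (by linarith : (0:ℝ) ≤ b - a)
      (by rw [hAc]; exact le_top)
    have hdisj : Disjoint A S := Set.disjoint_of_subset_right hSA disjoint_compl_right
    refine ⟨A ∪ S, hA.union hSmeas, ?_, ?_⟩
    · rw [measure_union hdisj hSmeas, hvol, hSvol, ← ENNReal.ofReal_add ha (by linarith)]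
      ring_nf
    · have h1 : symmDiff A (A ∪ S) = S := by
        rw [symmDiff_of_le Set.subset_union_left]
        rw [Set.union_diff_left]
        ext x; simp only [Set.mem_diff]; exact ⟨fun h => h.1, fun h => ⟨h, (hSA h : x ∈ Aᶜ)⟩⟩
      rw [h1, hSvol, abs_of_nonpos (by linarith), neg_sub]

lemma my_exists_const (L : Fin 4 → R4 →ₗ[ℝ] R2) {i j : Fin 4}
    (hbij : Function.Bijective (fun z : R4 => (L i z, L j z))) :
    ∃ c : ℝ≥0∞, c ≠ ⊤ ∧ ∀ A B : Set R2, MeasurableSet A → MeasurableSet B →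
      (∫⁻ z : R4, A.indicator (fun _ => (1:ℝ≥0∞)) (L i z) *
        B.indicator (fun _ => (1:ℝ≥0∞)) (L j z)) = c * (volume A * volume B) := by
  haveI h2 : (volume : Measure R2).IsAddHaarMeasure := by
    rw [Measure.volume_eq_prod]; infer_instance
  haveI h4 : (volume : Measure R4).IsAddHaarMeasure := by
    rw [Measure.volume_eq_prod]; infer_instance
  haveI h22 : (volume : Measure (R2 × R2)).IsAddHaarMeasure := by
    rw [Measure.volume_eq_prod]; infer_instance
  set P : R4 →ₗ[ℝ] R2 × R2 := (L i).prod (L j) with hP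
  have hPbij : Function.Bijective P := hbij
  set T : R4 ≃ₗ[ℝ] R2 × R2 := LinearEquiv.ofBijective P hPbij with hT
  set Tc : R4 ≃L[ℝ] R2 × R2 := T.toContinuousLinearEquiv with hTc
  have hTcapp : ∀ z : R4, Tc z = (L i z, L j z) := fun z => rfl
  haveI hHaar : (volume.map Tc : Measure (R2 × R2)).IsAddHaarMeasure :=
    Tc.isAddHaarMeasure_map volume
  obtain ⟨κ, hκ⟩ : ∃ κ : ℝ≥0, (volume.map Tc : Measure (R2 × R2)) = κ • volume :=
    ⟨_, Measure.isAddLeftInvariant_eq_smul _ _⟩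
  refine ⟨(κ : ℝ≥0∞), ENNReal.coe_ne_top, fun A B hA hB => ?_⟩
  have hfmeas : Measurable (fun p : R2 × R2 =>
      A.indicator (fun _ => (1:ℝ≥0∞)) p.1 * B.indicator (fun _ => (1:ℝ≥0∞)) p.2) :=
    ((measurable_const.indicator hA).comp measurable_fst).mul
      ((measurable_const.indicator hB).comp measurable_snd)
  calc (∫⁻ z : R4, A.indicator (fun _ => (1:ℝ≥0∞)) (L i z) *
        B.indicator (fun _ => (1:ℝ≥0∞)) (L j z))
      = ∫⁻ z : R4, (fun p : R2 × R2 =>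
          A.indicator (fun _ => (1:ℝ≥0∞)) p.1 * B.indicator (fun _ => (1:ℝ≥0∞)) p.2) (Tc z) := by
        simp only [hTcapp]
    _ = ∫⁻ p : R2 × R2, A.indicator (fun _ => (1:ℝ≥0∞)) p.1 *
          B.indicator (fun _ => (1:ℝ≥0∞)) p.2 ∂(volume.map Tc) :=
        (lintegral_map hfmeas (Tc.continuous.measurable)).symm
    _ = (κ : ℝ≥0∞) * ∫⁻ p : R2 × R2, A.indicator (fun _ => (1:ℝ≥0∞)) p.1 *
          B.indicator (fun _ => (1:ℝ≥0∞)) p.2 := by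
        rw [hκ, ENNReal.smul_def, lintegral_smul_measure, smul_eq_mul]
    _ = (κ : ℝ≥0∞) * ((∫⁻ x : R2, A.indicator (fun _ => (1:ℝ≥0∞)) x) *
          ∫⁻ y : R2, B.indicator (fun _ => (1:ℝ≥0∞)) y) := by
        congr 1
        exact lintegral_prod_mul (measurable_const.indicator hA).aemeasurable
          (measurable_const.indicator hB).aemeasurable
    _ = (κ : ℝ≥0∞) * (volume A * volume B) := by
        rw [lintegral_indicator_const hA (1:ℝ≥0∞), lintegral_indicator_const hB (1:ℝ≥0∞), one_mul, one_mul]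

def NLam (L : Fin 4 → R4 →ₗ[ℝ] R2) (E : Fin 4 → Set R2) : ℝ≥0∞ :=
  ∫⁻ z : R4, ∏ i, (E i).indicator (fun _ => (1 : ℝ≥0∞)) (L i z)

lemma ind_le_one (s : Set R2) (x : R2) : s.indicator (fun _ => (1:ℝ≥0∞)) x ≤ 1 := by
  classical
  rw [Set.indicator_apply]; split <;> simp

lemma meas_ind {s : Set R2} (hs : MeasurableSet s) (f : R4 →ₗ[ℝ] R2) :
    Measurable fun z : R4 => s.indicator (fun _ => (1:ℝ≥0∞)) (f z) :=
  (measurable_const.indicator hs).comp f.continuous_of_finiteDimensional.measurable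

lemma lam_eq_nlam (L : Fin 4 → R4 →ₗ[ℝ] R2) (E : Fin 4 → Set R2)
    (hE : ∀ i, MeasurableSet (E i)) : Lam L E = (NLam L E).toReal := by
  rw [Lam, integral_eq_lintegral_of_nonneg_ae]
  · congr 1
    refine lintegral_congr fun z => ?_
    rw [ENNReal.ofReal_prod_of_nonneg fun i _ =>
      Set.indicator_nonneg (fun _ _ => zero_le_one) _]
    exact Finset.prod_congr rfl fun i _ => by
      by_cases h : L i z ∈ E i <;> simp [Set.indicator_of_mem, Set.indicator_of_notMem, h]
  · exact Filter.Eventually.of_forall fun z =>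
      Finset.prod_nonneg fun i _ => Set.indicator_nonneg (fun _ _ => zero_le_one) _
  · exact (Finset.measurable_prod _ fun i _ =>
      (measurable_const.indicator (hE i)).comp
        (L i).continuous_of_finiteDimensional.measurable).aestronglyMeasurable

lemma nlam_le (L : Fin 4 → R4 →ₗ[ℝ] R2) {i j : Fin 4} (hij : i ≠ j) {c : ℝ≥0∞}
    (hc : ∀ A B : Set R2, MeasurableSet A → MeasurableSet B →
      (∫⁻ z : R4, A.indicator (fun _ => (1:ℝ≥0∞)) (L i z) *
        B.indicator (fun _ => (1:ℝ≥0∞)) (L j z)) = c * (volume A * volume B))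
    (E : Fin 4 → Set R2) (hE : ∀ k, MeasurableSet (E k)) :
    NLam L E ≤ c * (volume (E i) * volume (E j)) := by
  rw [← hc _ _ (hE i) (hE j)]
  refine lintegral_mono fun z => ?_
  have h1 := Finset.mul_prod_erase Finset.univ
    (fun k => (E k).indicator (fun _ => (1:ℝ≥0∞)) (L k z)) (Finset.mem_univ i)
  have hjmem : j ∈ Finset.univ.erase i := Finset.mem_erase.2 ⟨(Ne.symm hij), Finset.mem_univ j⟩
  have h2 := Finset.mul_prod_erase (Finset.univ.erase i)
    (fun k => (E k).indicator (fun _ => (1:ℝ≥0∞)) (L k z)) hjmem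
  have h3 : (∏ k ∈ (Finset.univ.erase i).erase j,
      (E k).indicator (fun _ => (1:ℝ≥0∞)) (L k z)) ≤ 1 :=
    Finset.prod_le_one (fun k _ => zero_le) (fun k _ => ind_le_one _ _)
  calc (∏ k, (E k).indicator (fun _ => (1:ℝ≥0∞)) (L k z))
      = (E i).indicator (fun _ => (1:ℝ≥0∞)) (L i z) *
        ((E j).indicator (fun _ => (1:ℝ≥0∞)) (L j z) *
          ∏ k ∈ (Finset.univ.erase i).erase j,
            (E k).indicator (fun _ => (1:ℝ≥0∞)) (L k z)) := by beta_reduce at h1 h2; rw [← h1, ← h2]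
    _ ≤ (E i).indicator (fun _ => (1:ℝ≥0∞)) (L i z) *
        ((E j).indicator (fun _ => (1:ℝ≥0∞)) (L j z) * 1) :=
        mul_le_mul_right (mul_le_mul_right h3 _) _
    _ = _ := by rw [mul_one]

lemma nlam_ne_top (L : Fin 4 → R4 →ₗ[ℝ] R2) {i j : Fin 4} (hij : i ≠ j) {c : ℝ≥0∞} (hct : c ≠ ⊤)
    (hc : ∀ A B : Set R2, MeasurableSet A → MeasurableSet B →
      (∫⁻ z : R4, A.indicator (fun _ => (1:ℝ≥0∞)) (L i z) *
        B.indicator (fun _ => (1:ℝ≥0∞)) (L j z)) = c * (volume A * volume B))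
    (E : Fin 4 → Set R2) (hE : ∀ k, MeasurableSet (E k))
    (hfin : volume (E i) ≠ ⊤) (hfin' : volume (E j) ≠ ⊤) : NLam L E ≠ ⊤ :=
  ne_top_of_le_ne_top (ENNReal.mul_ne_top hct (ENNReal.mul_ne_top hfin hfin'))
    (nlam_le L hij hc E hE)

lemma nlam_update_le (L : Fin 4 → R4 →ₗ[ℝ] R2) {i j : Fin 4} (hij : i ≠ j) {c : ℝ≥0∞}
    (hc : ∀ A B : Set R2, MeasurableSet A → MeasurableSet B →
      (∫⁻ z : R4, A.indicator (fun _ => (1:ℝ≥0∞)) (L i z) *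
        B.indicator (fun _ => (1:ℝ≥0∞)) (L j z)) = c * (volume A * volume B))
    (E : Fin 4 → Set R2) (hE : ∀ k, MeasurableSet (E k))
    (A' : Set R2) (hA' : MeasurableSet A') :
    NLam L E ≤ NLam L (Function.update E i A') +
      c * (volume (symmDiff (E i) A') * volume (E j)) := by
  classical
  set F := Function.update E i A' with hF
  have hFj : F j = E j := Function.update_of_ne (Ne.symm hij) _ _
  have hpt : ∀ z : R4, (∏ k, (E k).indicator (fun _ => (1:ℝ≥0∞)) (L k z)) ≤
      (∏ k, (F k).indicator (fun _ => (1:ℝ≥0∞)) (L k z)) +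
      (symmDiff (E i) A').indicator (fun _ => (1:ℝ≥0∞)) (L i z) *
        (E j).indicator (fun _ => (1:ℝ≥0∞)) (L j z) := by
    intro z
    by_cases hi : L i z ∈ A'
    · -- LHS ≤ ∏ F
      refine le_trans ?_ le_self_add
      have h1 := Finset.mul_prod_erase Finset.univ
        (fun k => (E k).indicator (fun _ => (1:ℝ≥0∞)) (L k z)) (Finset.mem_univ i)
      have h2 := Finset.mul_prod_erase Finset.univ
        (fun k => (F k).indicator (fun _ => (1:ℝ≥0∞)) (L k z)) (Finset.mem_univ i)
      beta_reduce at h1 h2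
      rw [← h1, ← h2]
      have heq : (∏ k ∈ Finset.univ.erase i, (E k).indicator (fun _ => (1:ℝ≥0∞)) (L k z)) =
          ∏ k ∈ Finset.univ.erase i, (F k).indicator (fun _ => (1:ℝ≥0∞)) (L k z) :=
        Finset.prod_congr rfl fun k hk => by
          rw [hF, Function.update_of_ne (Finset.mem_erase.1 hk).1]
      rw [heq]
      have hFi : (F i).indicator (fun _ => (1:ℝ≥0∞)) (L i z) = 1 := by
        rw [hF, Function.update_self, Set.indicator_of_mem hi]
      rw [hFi, one_mul]
      exact mul_le_of_le_one_left (zero_le) (ind_le_one _ _)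
    · by_cases h2 : L i z ∈ E i
      · -- LHS ≤ indicator Δ * indicator E j
        refine le_trans ?_ le_add_self
        have hΔ : (symmDiff (E i) A').indicator (fun _ => (1:ℝ≥0∞)) (L i z) = 1 :=
          Set.indicator_of_mem (Set.mem_symmDiff.2 (Or.inl ⟨h2, hi⟩)) _
        rw [hΔ, one_mul]
        have h1 := Finset.mul_prod_erase Finset.univ
          (fun k => (E k).indicator (fun _ => (1:ℝ≥0∞)) (L k z)) (Finset.mem_univ j)
        beta_reduce at h1
        rw [← h1]
        exact mul_le_of_le_one_right (zero_le)
          (Finset.prod_le_one (fun k _ => zero_le) (fun k _ => ind_le_one _ _))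
      · -- LHS = 0
        have : (∏ k, (E k).indicator (fun _ => (1:ℝ≥0∞)) (L k z)) = 0 :=
          Finset.prod_eq_zero (Finset.mem_univ i) (by rw [Set.indicator_of_notMem h2])
        rw [this]; exact zero_le
  calc NLam L E ≤ ∫⁻ z : R4, ((∏ k, (F k).indicator (fun _ => (1:ℝ≥0∞)) (L k z)) +
        (symmDiff (E i) A').indicator (fun _ => (1:ℝ≥0∞)) (L i z) *
          (E j).indicator (fun _ => (1:ℝ≥0∞)) (L j z)) := lintegral_mono hpt
    _ = NLam L F + ∫⁻ z : R4, (symmDiff (E i) A').indicator (fun _ => (1:ℝ≥0∞)) (L i z) *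
          (E j).indicator (fun _ => (1:ℝ≥0∞)) (L j z) := by
        rw [lintegral_add_right (g := fun z : R4 =>
            (symmDiff (E i) A').indicator (fun _ => (1:ℝ≥0∞)) (L i z) *
              (E j).indicator (fun _ => (1:ℝ≥0∞)) (L j z)) _ ((meas_ind ((hE i).symmDiff hA') (L i)).mul
          (meas_ind (hE j) (L j)))]
        rfl
    _ = NLam L F + c * (volume (symmDiff (E i) A') * volume (E j)) := by
        rw [hc _ _ ((hE i).symmDiff hA') (hE j)]

lemma vol_univ_R2 : volume (univ : Set R2) = ⊤ := by
  rw [← Set.univ_prod_univ, Measure.volume_eq_prod, Measure.prod_prod, Real.volume_univ]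
  simp

lemma exists_family (e : Fin 4 → ℝ) (he : ∀ i, 0 < e i) :
    ∃ E : Fin 4 → Set R2, (∀ i, MeasurableSet (E i)) ∧
      (∀ i, volume (E i) = ENNReal.ofReal (e i)) := by
  have h := fun i : Fin 4 => exists_subset_volume_eq MeasurableSet.univ (he i).le
    (by rw [vol_univ_R2]; exact le_top)
  choose B _ h2 h3 using h
  exact ⟨B, h2, h3⟩

lemma theta_one_sided (L : Fin 4 → R4 →ₗ[ℝ] R2)
    (hnd : ∀ i j, i ≠ j → Function.Bijective (fun z : R4 => (L i z, L j z))) :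
    ∃ C : ℝ, 0 ≤ C ∧ ∀ e e' : Fin 4 → ℝ, (∀ i, 0 < e i) → (∀ i, 0 < e' i) →
      Theta L e' ≤ Theta L e + C * (⨆ k, (e k + e' k)) * ⨆ j, |e j - e' j| := by
  classical
  set σ : Fin 4 → Fin 4 := fun i => if i = 0 then 1 else 0 with hσdef
  have hσ : ∀ i, i ≠ σ i := by decide
  have key := fun i => my_exists_const L (hnd i (σ i) (hσ i))
  choose c hct hcp using key
  refine ⟨∑ i, (c i).toReal, Finset.sum_nonneg fun i _ => ENNReal.toReal_nonneg, ?_⟩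
  intro e e' he he'
  set M := ⨆ k, (e k + e' k) with hMdef
  set m := ⨆ j, |e j - e' j| with hmdef
  have hbdd_range : ∀ f : Fin 4 → ℝ, BddAbove (Set.range f) :=
    fun f => (Set.finite_range f).bddAbove
  have hmj : ∀ j, |e j - e' j| ≤ m := by
    intro j; rw [hmdef]; exact le_ciSup (hbdd_range fun j => |e j - e' j|) j
  have hm0 : 0 ≤ m := le_trans (abs_nonneg (e 0 - e' 0)) (hmj 0)
  have hMk : ∀ k, e k ≤ M ∧ e' k ≤ M := by
    intro k
    have h : e k + e' k ≤ M := by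
      rw [hMdef]; exact le_ciSup (hbdd_range fun k => e k + e' k) k
    exact ⟨by linarith [(he' k)], by linarith [(he k)]⟩
  have hM0 : 0 ≤ M := le_trans (he 0).le (hMk 0).1
  -- bounded above
  have hbdd : ∀ f : Fin 4 → ℝ,
      BddAbove {t | ∃ E : Fin 4 → Set R2, (∀ i, MeasurableSet (E i)) ∧
        (∀ i, volume (E i) = ENNReal.ofReal (f i)) ∧ t = Lam L E} := by
    intro f
    refine ⟨(c 0 * (ENNReal.ofReal (f 0) * ENNReal.ofReal (f (σ 0)))).toReal, fun t ht => ?_⟩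
    obtain ⟨E, hEm, hEv, rfl⟩ := ht
    rw [lam_eq_nlam L E hEm]
    refine ENNReal.toReal_mono (ENNReal.mul_ne_top (hct 0)
      (ENNReal.mul_ne_top ENNReal.ofReal_ne_top ENNReal.ofReal_ne_top)) ?_
    have h := nlam_le L (hσ 0) (hcp 0) E hEm
    rwa [hEv 0, hEv (σ 0)] at h
  -- nonemptiness
  obtain ⟨E₀, hE₀m, hE₀v⟩ := exists_family e' he'
  -- main bound for each member of the e' set
  refine csSup_le ⟨Lam L E₀, E₀, hE₀m, hE₀v, rfl⟩ ?_
  rintro t ⟨E, hEm, hEv, rfl⟩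
  -- modified family with measures e
  have hmod := fun i => exists_modification (hEm i) (he' i).le (he i).le (hEv i)
  choose E'' hE''m hE''v hE''sd using hmod
  -- chain of updates
  set F0 : Fin 4 → Set R2 := E with hF0
  set F1 := Function.update F0 0 (E'' 0) with hF1
  set F2 := Function.update F1 1 (E'' 1) with hF2
  set F3 := Function.update F2 2 (E'' 2) with hF3
  set F4 := Function.update F3 3 (E'' 3) with hF4
  have hupd : ∀ (G : Fin 4 → Set R2), (∀ k, MeasurableSet (G k)) →
      ∀ (i : Fin 4) (A : Set R2), MeasurableSet A → ∀ k,
        MeasurableSet (Function.update G i A k) := by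
    intro G hG i A hA k
    by_cases h : k = i
    · subst h; rw [Function.update_self]; exact hA
    · rw [Function.update_of_ne h]; exact hG k
  have hF1m : ∀ k, MeasurableSet (F1 k) := hupd _ hEm _ _ (hE''m 0)
  have hF2m : ∀ k, MeasurableSet (F2 k) := hupd _ hF1m _ _ (hE''m 1)
  have hF3m : ∀ k, MeasurableSet (F3 k) := hupd _ hF2m _ _ (hE''m 2)
  have hF4m : ∀ k, MeasurableSet (F4 k) := hupd _ hF3m _ _ (hE''m 3)
  have hF4E : F4 = E'' := by
    funext k
    fin_cases k <;>
      simp [hF4, hF3, hF2, hF1, hF0, Function.update_apply]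
  -- value facts
  have hF00 : F0 0 = E 0 := rfl
  have hF11 : F1 1 = E 1 := by simp [hF1, hF0, Function.update_apply]
  have hF22 : F2 2 = E 2 := by simp [hF2, hF1, hF0, Function.update_apply]
  have hF33 : F3 3 = E 3 := by simp [hF3, hF2, hF1, hF0, Function.update_apply]
  have hmem0 : ∀ k, F0 k = E k ∨ F0 k = E'' k := fun k => Or.inl rfl
  have hmem1 : ∀ k, F1 k = E k ∨ F1 k = E'' k := by
    intro k; fin_cases k <;> simp [hF1, hF0, Function.update_apply]
  have hmem2 : ∀ k, F2 k = E k ∨ F2 k = E'' k := by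
    intro k; fin_cases k <;> simp [hF2, hF1, hF0, Function.update_apply]
  have hmem3 : ∀ k, F3 k = E k ∨ F3 k = E'' k := by
    intro k; fin_cases k <;> simp [hF3, hF2, hF1, hF0, Function.update_apply]
  have hvol_le : ∀ (G : Fin 4 → Set R2), (∀ k, G k = E k ∨ G k = E'' k) →
      ∀ k, volume (G k) ≤ ENNReal.ofReal M := by
    intro G hG k
    rcases hG k with h | h
    · rw [h, hEv k]; exact ENNReal.ofReal_le_ofReal (hMk k).2
    · rw [h, hE''v k]; exact ENNReal.ofReal_le_ofReal (hMk k).1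
  set X := ENNReal.ofReal m * ENNReal.ofReal M with hXdef
  have hXne : X ≠ ⊤ := ENNReal.mul_ne_top ENNReal.ofReal_ne_top ENNReal.ofReal_ne_top
  have hsd_le : ∀ n : Fin 4, volume (symmDiff (E n) (E'' n)) ≤ ENNReal.ofReal m := by
    intro n
    rw [hE''sd n]
    exact ENNReal.ofReal_le_ofReal (by rw [abs_sub_comm]; exact hmj n)
  have hbound : ∀ (n : Fin 4) (G : Fin 4 → Set R2), (∀ k, G k = E k ∨ G k = E'' k) →
      G n = E n → c n * (volume (symmDiff (G n) (E'' n)) * volume (G (σ n))) ≤ c n * X := by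
    intro n G hG hGn
    rw [hXdef]
    exact mul_le_mul_right (mul_le_mul' (hGn ▸ hsd_le n) (hvol_le G hG (σ n))) _
  -- the four steps
  have h00 : NLam L F0 ≤ NLam L F1 + c 0 * X := by
    have h := nlam_update_le L (hσ 0) (hcp 0) F0 hEm (E'' 0) (hE''m 0)
    rw [← hF1] at h
    exact h.trans (add_le_add_right (hbound 0 F0 hmem0 hF00) _)
  have h11 : NLam L F1 ≤ NLam L F2 + c 1 * X := by
    have h := nlam_update_le L (hσ 1) (hcp 1) F1 hF1m (E'' 1) (hE''m 1)
    rw [← hF2] at h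
    exact h.trans (add_le_add_right (hbound 1 F1 hmem1 hF11) _)
  have h22 : NLam L F2 ≤ NLam L F3 + c 2 * X := by
    have h := nlam_update_le L (hσ 2) (hcp 2) F2 hF2m (E'' 2) (hE''m 2)
    rw [← hF3] at h
    exact h.trans (add_le_add_right (hbound 2 F2 hmem2 hF22) _)
  have h33 : NLam L F3 ≤ NLam L F4 + c 3 * X := by
    have h := nlam_update_le L (hσ 3) (hcp 3) F3 hF3m (E'' 3) (hE''m 3)
    rw [← hF4] at h
    exact h.trans (add_le_add_right (hbound 3 F3 hmem3 hF33) _)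
  have hchain : NLam L E ≤ NLam L E'' + (∑ i, c i) * X := by
    calc NLam L E = NLam L F0 := rfl
      _ ≤ NLam L F1 + c 0 * X := h00
      _ ≤ (NLam L F2 + c 1 * X) + c 0 * X := add_le_add_left h11 _
      _ ≤ ((NLam L F3 + c 2 * X) + c 1 * X) + c 0 * X :=
          add_le_add_left (add_le_add_left h22 _) _
      _ ≤ (((NLam L F4 + c 3 * X) + c 2 * X) + c 1 * X) + c 0 * X :=
          add_le_add_left (add_le_add_left (add_le_add_left h33 _) _) _
      _ = NLam L E'' + (∑ i, c i) * X := by rw [hF4E, Fin.sum_univ_four]; ring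
  have hN : NLam L E'' ≠ ⊤ :=
    nlam_ne_top L (hσ 0) (hct 0) (hcp 0) E'' hE''m
      (by rw [hE''v 0]; exact ENNReal.ofReal_ne_top)
      (by rw [hE''v (σ 0)]; exact ENNReal.ofReal_ne_top)
  have hsum_ne : (∑ i, c i) ≠ ⊤ := by
    rw [Fin.sum_univ_four]
    exact ENNReal.add_ne_top.2 ⟨ENNReal.add_ne_top.2 ⟨ENNReal.add_ne_top.2
      ⟨hct 0, hct 1⟩, hct 2⟩, hct 3⟩
  have hreal : Lam L E ≤ Lam L E'' + (∑ i, (c i).toReal) * (m * M) := by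
    rw [lam_eq_nlam L E hEm, lam_eq_nlam L E'' hE''m]
    calc (NLam L E).toReal ≤ (NLam L E'' + (∑ i, c i) * X).toReal :=
        ENNReal.toReal_mono
          (ENNReal.add_ne_top.2 ⟨hN, ENNReal.mul_ne_top hsum_ne hXne⟩) hchain
      _ = (NLam L E'').toReal + (∑ i, (c i).toReal) * (m * M) := by
          rw [ENNReal.toReal_add hN (ENNReal.mul_ne_top hsum_ne hXne),
            ENNReal.toReal_mul, hXdef, ENNReal.toReal_mul,
            ENNReal.toReal_ofReal hm0, ENNReal.toReal_ofReal hM0,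
            ENNReal.toReal_sum (fun i _ => hct i)]
  have hth : Lam L E'' ≤ Theta L e := le_csSup (hbdd e) ⟨E'', hE''m, hE''v, rfl⟩
  have hrw : (∑ i, (c i).toReal) * (m * M) = (∑ i, (c i).toReal) * M * m := by ring
  linarith

/-- Θ is locally Lipschitz:
|Θ(e') − Θ(e)| ≤ C · maxₖ(eₖ + e'ₖ) · maxⱼ|eⱼ − e'ⱼ|. -/
theorem theta_locally_lipschitz (L : Fin 4 → R4 →ₗ[ℝ] R2)
    (hsurj : ∀ i, Function.Surjective (L i))
    (hnd : ∀ i j, i ≠ j → Function.Bijective (fun z : R4 => (L i z, L j z))) :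
    ∃ C : ℝ, 0 ≤ C ∧ ∀ e e' : Fin 4 → ℝ, (∀ i, 0 < e i) → (∀ i, 0 < e' i) →
      |Theta L e' - Theta L e| ≤
        C * (⨆ k, (e k + e' k)) * ⨆ j, |e j - e' j| := by
  obtain ⟨C, hC0, hC⟩ := theta_one_sided L hnd
  refine ⟨C, hC0, fun e e' he he' => ?_⟩
  rw [abs_sub_le_iff]
  constructor
  · linarith [hC e e' he he']
  · have h2 := hC e' e he' he
    have hM : (fun k => e' k + e k) = fun k => e k + e' k := by funext k; ring
    have hm : (fun j => |e' j - e j|) = fun j => |e j - e' j| := by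
      funext j; exact abs_sub_comm _ _
    rw [show (⨆ k, (e' k + e k)) = ⨆ k, (e k + e' k) from by rw [hM],
      show (⨆ j, |e' j - e j|) = ⨆ j, |e j - e' j| from by rw [hm]] at h2
    linarith
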